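/- Let Γ be a free abelian group of finite rank with a norm on Γ⊗ℝ, and let S ⊆ Γ be a strict semigroup not containing 0 (i.e., S generates a strict convex cone in Γ⊗ℝ). Then: (1) there exists an additive map u : S → ℝ, proper in the sense that preimages of bounded sets are finite, with u(S) ⊆ ℝ_{>0}; (2) for any a ∈ S, the set {b ∈ S : a − b ∈ S ∪ {0}} is finite; (3) for any a ∈ S and any k ≥ 1, the set of tuples (a₁,…,a_k) ∈ S^k with ∑ aᵢ = a is finite. -/

import Mathlib

/-- dot product on `Fin n → ℝ`. -/
def dotp {n : ℕ} (u x : Fin n → ℝ) : ℝ := ∑ i, u i * x i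

lemma dotp_self_pos {n : ℕ} {x : Fin n → ℝ} (hx : x ≠ 0) : 0 < dotp x x := by
  have h1 : ∀ i, 0 ≤ x i * x i := fun i => mul_self_nonneg _
  rcases Function.ne_iff.mp hx with ⟨i, hi⟩
  have : 0 < x i * x i := by
    have := mul_self_nonneg (x i)
    rcases this.lt_or_eq with h | h
    · exact h
    · exact absurd (by nlinarith : x i = 0) (by simpa using hi)
  exact Finset.sum_pos' (fun j _ => h1 j) ⟨i, Finset.mem_univ i, this⟩

lemma dotp_linear {n : ℕ} (f : (Fin n → ℝ) →ₗ[ℝ] ℝ) (x : Fin n → ℝ) :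
    f x = dotp (fun i => f (fun j => if i = j then 1 else 0)) x := by
  rw [LinearMap.pi_apply_eq_sum_univ]
  simp [dotp, mul_comm]

lemma add_mem_closure_of_add {E : Type*} [SeminormedAddCommGroup E] {s : Set E}
    (h : ∀ x ∈ s, ∀ y ∈ s, x + y ∈ s) {x y : E}
    (hx : x ∈ closure s) (hy : y ∈ closure s) : x + y ∈ closure s := by
  rw [mem_closure_iff_seq_limit] at hx hy ⊢
  obtain ⟨f, hf, hfl⟩ := hx
  obtain ⟨g, hg, hgl⟩ := hy
  exact ⟨fun k => f k + g k, fun k => h _ (hf k) _ (hg k), hfl.add hgl⟩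

/-- The conical hull of a set `S`: the smallest convex cone containing `S`. -/
def coneHull {E : Type*} [AddCommMonoid E] [SMul ℝ E] (S : Set E) : Set E :=
  ⋂₀ {C : Set E | S ⊆ C ∧ (∀ r : ℝ, 0 < r → ∀ x ∈ C, r • x ∈ C) ∧
      ∀ x ∈ C, ∀ y ∈ C, x + y ∈ C}

/-- The canonical embedding `Γ = ℤⁿ → Γ_ℝ = ℝⁿ`. -/
def iotaR (n : ℕ) (a : Fin n → ℤ) : Fin n → ℝ := fun i => (a i : ℝ)

section CH
variable {E : Type*} [AddCommMonoid E] [SMul ℝ E] (S : Set E)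

lemma subset_coneHull : S ⊆ coneHull S := fun x hx _ hC => hC.1 hx

lemma coneHull_smul {r : ℝ} (hr : 0 < r) {x : E} (hx : x ∈ coneHull S) :
    r • x ∈ coneHull S := fun C hC => hC.2.1 r hr x (hx C hC)

lemma coneHull_add {x y : E} (hx : x ∈ coneHull S) (hy : y ∈ coneHull S) :
    x + y ∈ coneHull S := fun C hC => hC.2.2 x (hx C hC) y (hy C hC)

end CH

lemma coneHull_convex {n : ℕ} (S : Set (Fin n → ℝ)) : Convex ℝ (coneHull S) := by
  intro x hx y hy a b ha hb hab
  rcases ha.lt_or_eq with ha' | ha'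
  · rcases hb.lt_or_eq with hb' | hb'
    · exact coneHull_add S (coneHull_smul S ha' hx) (coneHull_smul S hb' hy)
    · have : a = 1 := by linarith
      simp [← hb', this]; simpa [this] using hx
  · have : b = 1 := by linarith
    simp [← ha', this]; simpa [this] using hy

section Cone
variable {n : ℕ} {C : Set (Fin n → ℝ)} (hclosed : IsClosed C) (hconv : Convex ℝ C)
  (hsmul : ∀ r : ℝ, 0 < r → ∀ x ∈ C, r • x ∈ C) (h0 : (0 : Fin n → ℝ) ∈ C)

include hclosed hconv hsmul h0 in
lemma cone_sep {x : Fin n → ℝ} (hx : x ∉ C) :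
    ∃ v : Fin n → ℝ, (∀ y ∈ C, 0 ≤ dotp v y) ∧ dotp v x < 0 := by
  obtain ⟨f, u, hfC, hfx⟩ := geometric_hahn_banach_closed_point hconv hclosed hx
  have hu : 0 < u := by simpa using hfC 0 h0
  have hfle : ∀ y ∈ C, f y ≤ 0 := by
    intro y hy
    by_contra h
    push_neg at h
    have ht : 0 < (u + 1) / f y := div_pos (by linarith) h
    have h1 := hfC _ (hsmul _ ht y hy)
    rw [map_smul] at h1
    have h2 : (u + 1) / f y * f y = u + 1 := div_mul_cancel₀ _ (ne_of_gt h)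
    simp only [smul_eq_mul] at *
    linarith
  refine ⟨fun i => -(f (fun j => if i = j then 1 else 0)), ?_, ?_⟩
  · intro y hy
    have h3 := dotp_linear (f : (Fin n → ℝ) →ₗ[ℝ] ℝ) y
    simp only [ContinuousLinearMap.coe_coe] at h3
    have h2 : dotp (fun i => -(f fun j => if i = j then 1 else 0)) y = -(f y) := by
      rw [h3]; simp [dotp, Finset.sum_neg_distrib]
    rw [h2]
    linarith [hfle y hy]
  · have h3 := dotp_linear (f : (Fin n → ℝ) →ₗ[ℝ] ℝ) x
    simp only [ContinuousLinearMap.coe_coe] at h3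
    have h2 : dotp (fun i => -(f fun j => if i = j then 1 else 0)) x = -(f x) := by
      rw [h3]; simp [dotp, Finset.sum_neg_distrib]
    rw [h2]; linarith

include hclosed hconv hsmul h0 in
lemma dual_interior_nonempty
    (hline : ¬ ∃ v : Fin n → ℝ, v ≠ 0 ∧ ∀ t : ℝ, t • v ∈ C) :
    (interior {v : Fin n → ℝ | ∀ y ∈ C, 0 ≤ dotp v y}).Nonempty := by
  set D : Set (Fin n → ℝ) := {v | ∀ y ∈ C, 0 ≤ dotp v y} with hD
  by_contra hint
  rw [Set.not_nonempty_iff_eq_empty] at hint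
  have hDconv : Convex ℝ D := by
    intro v hv w hw a b ha hb hab
    intro y hy
    have h1 : dotp (a • v + b • w) y = a * dotp v y + b * dotp w y := by
      simp [dotp, add_mul, Finset.sum_add_distrib, Finset.mul_sum, mul_assoc]
    rw [h1]
    have := hv y hy; have := hw y hy
    positivity
  have h0D : (0 : Fin n → ℝ) ∈ D := by intro y hy; simp [dotp]
  have haff : affineSpan ℝ D ≠ ⊤ := by
    intro h
    have := (hDconv.interior_nonempty_iff_affineSpan_eq_top).2 h
    rw [hint] at this
    exact Set.not_nonempty_empty this
  have hspan : Submodule.span ℝ D ≠ ⊤ := by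
    intro h
    apply haff
    have h1 : (affineSpan ℝ (insert (0 : Fin n → ℝ) D) : Set (Fin n → ℝ))
        = (Submodule.span ℝ D : Set (Fin n → ℝ)) := affineSpan_insert_zero (k := ℝ) D
    rw [Set.insert_eq_self.2 h0D, h] at h1
    apply AffineSubspace.coe_injective
    rw [h1]; simp
  obtain ⟨φ, hφ0, hφ⟩ := (Submodule.span ℝ D).exists_dual_map_eq_bot_of_lt_top
    (lt_top_iff_ne_top.2 hspan) inferInstance
  have hφD : ∀ u ∈ D, φ u = 0 := by
    intro u hu
    have : φ u ∈ Submodule.map φ (Submodule.span ℝ D) :=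
      Submodule.mem_map_of_mem (Submodule.subset_span hu)
    rw [hφ] at this
    simpa using this
  set v : Fin n → ℝ := fun i => φ (fun j => if i = j then 1 else 0) with hv
  have hvne : v ≠ 0 := by
    intro h
    apply hφ0
    apply LinearMap.ext; intro x
    rw [dotp_linear φ x, ← hv, h]
    simp [dotp]
  have hdot : ∀ u ∈ D, dotp u v = 0 := by
    intro u hu
    have h1 := dotp_linear φ u
    rw [hφD u hu] at h1
    rw [← hv] at h1
    have h2 : dotp v u = dotp u v := by simp [dotp, mul_comm]
    rw [← h2, ← h1]
  have hvC : v ∈ C := by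
    by_contra h
    obtain ⟨w, hwD, hwv⟩ := cone_sep hclosed hconv hsmul h0 h
    rw [hdot w hwD] at hwv
    exact lt_irrefl 0 hwv
  have hvC' : -v ∈ C := by
    by_contra h
    obtain ⟨w, hwD, hwv⟩ := cone_sep hclosed hconv hsmul h0 h
    have h1 : dotp w (-v) = - dotp w v := by simp [dotp]
    rw [h1, hdot w hwD] at hwv
    simp at hwv
  apply hline
  refine ⟨v, hvne, fun t => ?_⟩
  rcases lt_trichotomy t 0 with ht | ht | ht
  · have h1 : t • v = (-t) • (-v) := by simp
    rw [h1]
    exact hsmul _ (by linarith) _ hvC'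
  · simpa [ht] using h0
  · exact hsmul _ ht _ hvC

include hsmul in
omit hclosed hconv h0 in
lemma dual_int_pos {u₀ : Fin n → ℝ}
    (hu₀ : u₀ ∈ interior {v : Fin n → ℝ | ∀ y ∈ C, 0 ≤ dotp v y}) :
    ∀ x ∈ C, x ≠ 0 → 0 < dotp u₀ x := by
  intro x hx hxne
  have hnn : 0 ≤ dotp u₀ x := interior_subset hu₀ x hx
  rcases hnn.lt_or_eq with h | h
  · exact h
  exfalso
  obtain ⟨ε, hε, hball⟩ := Metric.isOpen_iff.mp isOpen_interior u₀ hu₀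
  have hxnorm : 0 < ‖x‖ := norm_pos_iff.2 hxne
  set c : ℝ := ε / (2 * ‖x‖) with hc
  have hcpos : 0 < c := by positivity
  have hmem : u₀ - c • x ∈ Metric.ball u₀ ε := by
    rw [Metric.mem_ball, dist_eq_norm]
    have h1 : u₀ - c • x - u₀ = -(c • x) := by abel
    rw [h1, norm_neg, norm_smul, Real.norm_eq_abs, abs_of_pos hcpos]
    rw [hc, div_mul_eq_mul_div, mul_comm, div_lt_iff₀ (by positivity)]
    nlinarith
  have hD : u₀ - c • x ∈ {v : Fin n → ℝ | ∀ y ∈ C, 0 ≤ dotp v y} :=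
    interior_subset (hball hmem)
  have h1 : dotp (u₀ - c • x) x = dotp u₀ x - c * dotp x x := by
    simp [dotp, sub_mul, Finset.sum_sub_distrib, Finset.mul_sum, mul_assoc]
  have h2 := hD x hx
  rw [h1, ← h] at h2
  nlinarith [dotp_self_pos hxne]

include hclosed hsmul in
omit hconv h0 in
lemma dual_int_bound {u₀ : Fin n → ℝ}
    (hu₀ : u₀ ∈ interior {v : Fin n → ℝ | ∀ y ∈ C, 0 ≤ dotp v y}) :
    ∃ c : ℝ, 0 < c ∧ ∀ x ∈ C, c * ‖x‖ ≤ dotp u₀ x := by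
  have hpos := dual_int_pos hsmul hu₀
  set T := Metric.sphere (0 : Fin n → ℝ) 1 ∩ C with hT
  by_cases hTne : T.Nonempty
  · have hTcomp : IsCompact T := (isCompact_sphere 0 1).inter_right hclosed
    have hcont : Continuous fun x : Fin n → ℝ => dotp u₀ x := by
      apply continuous_finset_sum
      intro i _
      exact continuous_const.mul (continuous_apply i)
    obtain ⟨z, hzT, hz⟩ := hTcomp.exists_isMinOn hTne hcont.continuousOn
    have hz1 : ‖z‖ = 1 := by simpa using hzT.1
    have hzne : z ≠ 0 := by intro h; rw [h] at hz1; simp at hz1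
    refine ⟨dotp u₀ z, hpos z hzT.2 hzne, ?_⟩
    intro x hx
    rcases eq_or_ne x 0 with rfl | hxne
    · simp [dotp]
    · have hxnorm : 0 < ‖x‖ := norm_pos_iff.2 hxne
      have hw : ‖x‖⁻¹ • x ∈ T := by
        constructor
        · simp [norm_smul, abs_of_pos (inv_pos.2 hxnorm), inv_mul_cancel₀ hxnorm.ne']
        · exact hsmul _ (inv_pos.2 hxnorm) _ hx
      have hle := hz hw
      have h2 : dotp u₀ (‖x‖⁻¹ • x) = ‖x‖⁻¹ * dotp u₀ x := by
        simp [dotp, Finset.mul_sum, mul_assoc, mul_left_comm]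
      simp only [Set.mem_setOf_eq, h2] at hle
      calc dotp u₀ z * ‖x‖ ≤ (‖x‖⁻¹ * dotp u₀ x) * ‖x‖ :=
            mul_le_mul_of_nonneg_right hle hxnorm.le
        _ = dotp u₀ x := by field_simp
  · refine ⟨1, one_pos, ?_⟩
    intro x hx
    rcases eq_or_ne x 0 with rfl | hxne
    · simp [dotp]
    · exfalso
      apply hTne
      have hxnorm : 0 < ‖x‖ := norm_pos_iff.2 hxne
      refine ⟨‖x‖⁻¹ • x, ?_, hsmul _ (inv_pos.2 hxnorm) _ hx⟩
      simp [norm_smul, abs_of_pos (inv_pos.2 hxnorm), inv_mul_cancel₀ hxnorm.ne']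

end Cone

/-- For a strict semigroup `S ⊆ Γ = ℤⁿ` without zero (it generates a strict
convex cone in `Γ_ℝ = ℝⁿ`):
(1) there is an additive proper map `u : Γ → ℝ` positive on `S`;
(2) lower sets `{b ∈ S : b ≤ a}` are finite;
(3) the set of decompositions of `a ∈ S` as a sum of `k` elements of `S` is finite. -/
theorem stmt4 (n : ℕ) (S : Set (Fin n → ℤ))
    (hsemi : ∀ a ∈ S, ∀ b ∈ S, a + b ∈ S)
    (h0 : (0 : Fin n → ℤ) ∉ S)
    (hstrict : ¬ ∃ (p v : Fin n → ℝ), v ≠ 0 ∧ ∀ t : ℝ,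
        p + t • v ∈ closure (coneHull (iotaR n '' S))) :
    (∃ u : (Fin n → ℤ) →+ ℝ, (∀ a ∈ S, 0 < u a) ∧
        ∀ N : ℝ, {a ∈ S | |u a| ≤ N}.Finite) ∧
    (∀ a ∈ S, {b ∈ S | a - b ∈ S ∪ {0}}.Finite) ∧
    (∀ a ∈ S, ∀ k : ℕ, 1 ≤ k →
        {x : Fin k → (Fin n → ℤ) | (∀ i, x i ∈ S) ∧ ∑ i, x i = a}.Finite) := by
  suffices h1 : ∃ u : (Fin n → ℤ) →+ ℝ, (∀ a ∈ S, 0 < u a) ∧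
      ∀ N : ℝ, {a ∈ S | |u a| ≤ N}.Finite by
    obtain ⟨u, hupos, hproper⟩ := h1
    refine ⟨⟨u, hupos, hproper⟩, ?_, ?_⟩
    · intro a ha
      apply (hproper (|u a|)).subset
      rintro b ⟨hbS, hab⟩
      refine ⟨hbS, ?_⟩
      rw [abs_of_pos (hupos b hbS), abs_of_pos (hupos a ha)]
      rcases hab with hab | hab
      · have h2 : 0 < u (a - b) := hupos _ hab
        rw [map_sub] at h2
        linarith
      · simp only [Set.mem_singleton_iff, sub_eq_zero] at hab
        rw [hab]
    · intro a ha k hk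
      apply ((Set.Finite.pi fun _ : Fin k => hproper (|u a|)).subset)
      rintro x ⟨hxS, hxsum⟩
      rw [Set.mem_univ_pi]
      intro i
      refine ⟨hxS i, ?_⟩
      rw [abs_of_pos (hupos _ (hxS i)), abs_of_pos (hupos a ha)]
      have h2 : ∑ j, u (x j) = u a := by rw [← hxsum, map_sum]
      have h3 : u (x i) ≤ ∑ j, u (x j) :=
        Finset.single_le_sum (f := fun j => u (x j))
          (fun j _ => (hupos _ (hxS j)).le) (Finset.mem_univ i)
      linarith
  by_cases hS : S.Nonempty
  · obtain ⟨s₀, hs₀⟩ := hS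
    set CH := coneHull (iotaR n '' S) with hCH
    set C := closure CH with hCdef
    have hCclosed : IsClosed C := isClosed_closure
    have hCconv : Convex ℝ C := (coneHull_convex _).closure
    have hCsmul : ∀ r : ℝ, 0 < r → ∀ x ∈ C, r • x ∈ C := by
      intro r hr x hx
      have hmap : Set.MapsTo (fun y : Fin n → ℝ => r • y) CH CH :=
        fun y hy => coneHull_smul _ hr hy
      exact hmap.closure (continuous_const_smul r) hx
    have hiot : ∀ a ∈ S, iotaR n a ≠ 0 := by
      intro a ha h
      apply h0
      have h1 : a = 0 := by
        funext i
        have := congrFun h i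
        simpa [iotaR] using this
      rwa [h1] at ha
    have hiotaC : ∀ a ∈ S, iotaR n a ∈ C :=
      fun a ha => subset_closure (subset_coneHull _ ⟨a, ha, rfl⟩)
    have hx₀ : iotaR n s₀ ∈ CH := subset_coneHull _ ⟨s₀, hs₀, rfl⟩
    have h0C : (0 : Fin n → ℝ) ∈ C := by
      rw [hCdef, mem_closure_iff_seq_limit]
      refine ⟨fun k => ((k : ℝ) + 1)⁻¹ • iotaR n s₀,
        fun k => coneHull_smul _ (by positivity) hx₀, ?_⟩
      have h1 : Filter.Tendsto (fun k : ℕ => ((k : ℝ) + 1)⁻¹)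
          Filter.atTop (nhds 0) := by
        simpa [one_div] using tendsto_one_div_add_atTop_nhds_zero_nat (𝕜 := ℝ)
      have := h1.smul_const (iotaR n s₀)
      simpa using this
    have hline : ¬ ∃ v : Fin n → ℝ, v ≠ 0 ∧ ∀ t : ℝ, t • v ∈ C := by
      rintro ⟨v, hv, hvt⟩
      exact hstrict ⟨0, v, hv, fun t => by simpa using hvt t⟩
    obtain ⟨u₀, hu₀⟩ := dual_interior_nonempty hCclosed hCconv hCsmul h0C hline
    obtain ⟨c, hc, hbound⟩ := dual_int_bound hCclosed hCsmul hu₀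
    have hpos := dual_int_pos hCsmul hu₀
    refine ⟨AddMonoidHom.mk' (fun a => dotp u₀ (iotaR n a)) ?_, ?_, ?_⟩
    · intro a b
      simp only [dotp, iotaR]
      push_cast
      simp [mul_add, Finset.sum_add_distrib]
    · intro a ha
      exact hpos _ (hiotaC a ha) (hiot a ha)
    · intro N
      set M : ℤ := ⌈N / c⌉ with hM
      apply ((Set.Finite.pi fun _ : Fin n => Set.finite_Icc (-M) M).subset)
      rintro a ⟨haS, haN⟩
      simp only [AddMonoidHom.mk'_apply] at haN
      have h2 : c * ‖iotaR n a‖ ≤ dotp u₀ (iotaR n a) := hbound _ (hiotaC a haS)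
      have h3 : dotp u₀ (iotaR n a) ≤ N := (abs_le.mp haN).2
      have h4 : ‖iotaR n a‖ ≤ N / c := by
        rw [le_div_iff₀ hc, mul_comm]
        linarith
      rw [Set.mem_univ_pi]
      intro i
      have h5 : |(a i : ℝ)| ≤ ‖iotaR n a‖ := by
        have := norm_le_pi_norm (iotaR n a) i
        simpa [iotaR, Real.norm_eq_abs] using this
      have h6 : (|a i| : ℝ) ≤ (M : ℝ) := by
        push_cast
        exact le_trans h5 (le_trans h4 (Int.le_ceil _))
      have h7 : |a i| ≤ M := by exact_mod_cast h6
      simpa [Set.mem_Icc] using abs_le.mp h7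
  · rw [Set.not_nonempty_iff_eq_empty] at hS
    subst hS
    refine ⟨0, by simp, fun N => ?_⟩
    apply Set.finite_empty.subset
    rintro a ⟨ha, -⟩
    exact absurd ha (Set.notMem_empty a)
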